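/- arXiv:2603.06155 — 2 statements merged into one kernel-verified Lean document; each statement's English description precedes it below -/
import Mathlib

section
/- Let 𝒪 be an order ideal in P = K[x_0,…,x_n] and fix an arbitrary labeling σ_1, σ_2, … of its border ∂𝒪. Then the cones of the associated border reduction structure are pairwise disjoint: for all indices i ≠ j, C(σ_i) ∩ C(σ_j) = ∅. -/
open MvPolynomial

namespace Border

/-- A term of `K[x_0, …, x_n]`, identified with its exponent vector. -/
abbrev Term (n : ℕ) := Fin (n + 1) →₀ ℕ

variable {n : ℕ}

/-- The (standard) degree of a term. -/
def tdeg (m : Term n) : ℕ := ∑ i, m i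

/-- An order ideal: a nonempty set of terms closed under divisors. -/
def IsOrderIdeal (O : Set (Term n)) : Prop :=
  O.Nonempty ∧ ∀ τ ∈ O, ∀ τ' : Term n, τ' ≤ τ → τ' ∈ O

/-- The border `∂𝒪 = (x_0·𝒪 ∪ ⋯ ∪ x_n·𝒪) ∖ 𝒪`. -/
def border (O : Set (Term n)) : Set (Term n) :=
  {σ | σ ∉ O ∧ ∃ r : Fin (n + 1), ∃ τ ∈ O, σ = τ + Finsupp.single r 1}

/-- Multiplicative set of a border term `σ`, with respect to a labeling `lab` of the border:
`𝒯_σ = {η : σ' ∤ η·σ for every border term σ' with a larger label}`. -/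
def mulSet (O : Set (Term n)) (lab : Term n → ℕ) (σ : Term n) : Set (Term n) :=
  {η | ∀ σ' ∈ border O, lab σ < lab σ' → ¬ σ' ≤ η + σ}

/-- The cone `C(σ) = {η·σ : η ∈ 𝒯_σ}`. -/
def cone (O : Set (Term n)) (lab : Term n → ℕ) (σ : Term n) : Set (Term n) :=
  (fun η => η + σ) '' mulSet O lab σ

/-- A labeling of the border which is injective and ordered increasingly by degree. -/
def DegOrderedLabeling (O : Set (Term n)) (lab : Term n → ℕ) : Prop :=
  Set.InjOn lab (border O) ∧
    ∀ σ ∈ border O, ∀ σ' ∈ border O, lab σ < lab σ' → tdeg σ ≤ tdeg σ'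

/-- Iterated border closures: `∂⁰𝒪 := 𝒪`, and the `(k+1)`-st closure adds the border. -/
def borderClosure (O : Set (Term n)) : ℕ → Set (Term n)
  | 0 => O
  | k + 1 => borderClosure O k ∪ border (borderClosure O k)

/-- The index `ind_𝒪(τ)`: the least `k` with `τ ∈ ∂^k𝒪`. -/
noncomputable def ind (O : Set (Term n)) (τ : Term n) : ℕ :=
  sInf {k | τ ∈ borderClosure O k}

/-- Degree-`d` part of a set of terms. -/
def Od (O : Set (Term n)) (d : ℕ) : Set (Term n) := {τ | τ ∈ O ∧ tdeg τ = d}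

variable {K : Type*} [Field K]

/-- The index of a nonzero polynomial: the maximal index of a term of its support. -/
noncomputable def indP (O : Set (Term n)) (f : MvPolynomial (Fin (n + 1)) K) : ℕ :=
  f.support.sup (ind O)

/-- A homogeneous `∂𝒪`-prebasis: a family `g σ = σ - Σ_{τ ∈ 𝒪_{deg σ}} c_{στ} τ`. -/
def IsPrebasis (O : Set (Term n)) (g : Term n → MvPolynomial (Fin (n + 1)) K) : Prop :=
  ∀ σ ∈ border O, ∀ τ ∈ (monomial σ (1 : K) - g σ).support, τ ∈ O ∧ tdeg τ = tdeg σ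

/-- The set of border reductors `𝒯G = {η·g_σ : σ ∈ ∂𝒪, η ∈ 𝒯_σ}`. -/
def reductors (O : Set (Term n)) (lab : Term n → ℕ)
    (g : Term n → MvPolynomial (Fin (n + 1)) K) : Set (MvPolynomial (Fin (n + 1)) K) :=
  {p | ∃ σ ∈ border O, ∃ η ∈ mulSet O lab σ, p = monomial η (1 : K) * g σ}

/-- The degree-`d` border reductors `𝒯G_d = 𝒯G ∩ P_d`. -/
def reductorsDeg (O : Set (Term n)) (lab : Term n → ℕ)
    (g : Term n → MvPolynomial (Fin (n + 1)) K) (d : ℕ) :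
    Set (MvPolynomial (Fin (n + 1)) K) :=
  reductors O lab g ∩ {p | p.IsHomogeneous d}

/-- One step of the border reduction relation `→_G`. -/
def Step (O : Set (Term n)) (lab : Term n → ℕ)
    (g : Term n → MvPolynomial (Fin (n + 1)) K)
    (f h : MvPolynomial (Fin (n + 1)) K) : Prop :=
  ∃ σ ∈ border O, ∃ η ∈ mulSet O lab σ, η + σ ∈ f.support ∧
    h = f - f.coeff (η + σ) • (monomial η (1 : K) * g σ)

/-- The border reduction relation `→⁺_G` (finitely many, possibly zero, steps). -/
def Reduces (O : Set (Term n)) (lab : Term n → ℕ)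
    (g : Term n → MvPolynomial (Fin (n + 1)) K) :
    MvPolynomial (Fin (n + 1)) K → MvPolynomial (Fin (n + 1)) K → Prop :=
  Relation.ReflTransGen (Step O lab g)

/-- The `K`-vector space spanned by a set of terms. -/
noncomputable def spanTerms (K : Type*) [Field K] (S : Set (Term n)) :
    Submodule K (MvPolynomial (Fin (n + 1)) K) :=
  Submodule.span K ((fun τ => monomial τ (1 : K)) '' S)

/-- The ideal `(G)` generated by a `∂𝒪`-prebasis. -/
noncomputable def idealG (O : Set (Term n)) (g : Term n → MvPolynomial (Fin (n + 1)) K) :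
    Ideal (MvPolynomial (Fin (n + 1)) K) :=
  Ideal.span (g '' border O)

/-- The degree-`d` part `I_d` of an ideal, as a `K`-vector subspace. -/
noncomputable def degPart (I : Ideal (MvPolynomial (Fin (n + 1)) K)) (d : ℕ) :
    Submodule K (MvPolynomial (Fin (n + 1)) K) :=
  Submodule.restrictScalars K I ⊓ homogeneousSubmodule (Fin (n + 1)) K d

/-- Homogeneous ideal. -/
def IsHomogeneousIdeal (I : Ideal (MvPolynomial (Fin (n + 1)) K)) : Prop :=
  ∀ f ∈ I, ∀ d : ℕ, homogeneousComponent d f ∈ I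

/-- `G` is a homogeneous `∂𝒪`-basis of `J`: it is a prebasis contained in `J` and for every
`d` one has `P_d = J_d ⊕ ⟨𝒪_d⟩`, i.e. the residue classes of `𝒪_d` are a basis of `P_d/J_d`. -/
def IsBorderBasisOf (O : Set (Term n)) (g : Term n → MvPolynomial (Fin (n + 1)) K)
    (J : Ideal (MvPolynomial (Fin (n + 1)) K)) : Prop :=
  IsPrebasis O g ∧ (∀ σ ∈ border O, g σ ∈ J) ∧
    ∀ d : ℕ, degPart J d ⊔ spanTerms K (Od O d) = homogeneousSubmodule (Fin (n + 1)) K d ∧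
      Disjoint (degPart J d) (spanTerms K (Od O d))

/-- An `m`-lower representation of `f` by `𝒯G`: `f = Σ c_j • η_j·g_{σ_j}` with distinct
pairs `(η_j, σ_j)`, `η_j ∈ 𝒯_{σ_j}` and `ind(η_j σ_j) ≤ m`. -/
def HasLRep (O : Set (Term n)) (lab : Term n → ℕ)
    (g : Term n → MvPolynomial (Fin (n + 1)) K)
    (f : MvPolynomial (Fin (n + 1)) K) (m : ℕ) : Prop :=
  ∃ (s : Finset (Term n × Term n)) (c : Term n × Term n → K),
    (∀ p ∈ s, p.2 ∈ border O ∧ p.1 ∈ mulSet O lab p.2 ∧ ind O (p.1 + p.2) ≤ m) ∧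
    f = ∑ p ∈ s, c p • (monomial p.1 (1 : K) * g p.2)

/-- An `m`-lower representation of `f` by `𝒯G_d`. -/
def HasLRepDeg (O : Set (Term n)) (lab : Term n → ℕ)
    (g : Term n → MvPolynomial (Fin (n + 1)) K)
    (f : MvPolynomial (Fin (n + 1)) K) (m d : ℕ) : Prop :=
  ∃ (s : Finset (Term n × Term n)) (c : Term n × Term n → K),
    (∀ p ∈ s, p.2 ∈ border O ∧ p.1 ∈ mulSet O lab p.2 ∧ ind O (p.1 + p.2) ≤ m ∧
      (monomial p.1 (1 : K) * g p.2).IsHomogeneous d) ∧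
    f = ∑ p ∈ s, c p • (monomial p.1 (1 : K) * g p.2)

/-- The subtype of terms of `𝒪` of degree `d`. -/
abbrev OdSub (O : Set (Term n)) (d : ℕ) : Type _ := {τ : Term n // τ ∈ Od O d}

lemma tdeg_component_lt {d : ℕ} (m : Term n) (h : tdeg m = d) (i : Fin (n + 1)) :
    m i < d + 1 := by
  have : m i ≤ tdeg m :=
    Finset.single_le_sum (f := fun j => m j) (fun j _ => Nat.zero_le _) (Finset.mem_univ i)
  omega

instance (O : Set (Term n)) (d : ℕ) : Finite (OdSub O d) := by
  have hinj : Function.Injective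
      (fun τ : OdSub O d => fun i : Fin (n + 1) =>
        (⟨τ.1 i, tdeg_component_lt τ.1 τ.2.2 i⟩ : Fin (d + 1))) := by
    intro a b hab
    apply Subtype.ext
    apply Finsupp.ext
    intro i
    simpa using congrArg Fin.val (congrFun hab i)
  exact Finite.of_injective _ hinj

noncomputable instance (O : Set (Term n)) (d : ℕ) : Fintype (OdSub O d) :=
  Fintype.ofFinite _

open scoped Classical in
/-- The `r`-th `d`-graded formal multiplication matrix of a prebasis `G`,
with rows indexed by `𝒪_{d+1}` and columns by `𝒪_d`. -/
noncomputable def multMatrix (O : Set (Term n))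
    (g : Term n → MvPolynomial (Fin (n + 1)) K) (r : Fin (n + 1)) (d : ℕ) :
    Matrix (OdSub O (d + 1)) (OdSub O d) K :=
  Matrix.of fun τ' τ =>
    if τ.1 + Finsupp.single r 1 ∈ O then
      (if τ.1 + Finsupp.single r 1 = τ'.1 then 1 else 0)
    else (monomial (τ.1 + Finsupp.single r 1) (1 : K)
            - g (τ.1 + Finsupp.single r 1)).coeff τ'.1

/-- The minimum degree of a border term. -/
noncomputable def minDegBorder (O : Set (Term n)) : ℕ := sInf (tdeg '' border O)

/-- The `d`-th Macaulay transformation `a^{⟨d⟩}`, computed greedily. -/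
noncomputable def macaulay : ℕ → ℕ → ℕ
  | 0, _ => 0
  | d + 1, a =>
    if a = 0 then 0
    else
      Nat.choose (sSup {k | Nat.choose k (d + 1) ≤ a} + 1) (d + 2) +
        macaulay d (a - Nat.choose (sSup {k | Nat.choose k (d + 1) ≤ a}) (d + 1))

/-- An ideal is generated in degrees `≤ m` if it is generated by its homogeneous
elements of degree `≤ m`. -/
def GeneratedInDegLE (I : Ideal (MvPolynomial (Fin (n + 1)) K)) (m : ℕ) : Prop :=
  I = Ideal.span {f | f ∈ I ∧ ∃ d ≤ m, f.IsHomogeneous d}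

/-- **Disjointness of cones.** For an order ideal `𝒪` with an arbitrary injective labeling of
its border, the cones of distinct border terms are disjoint. -/
theorem cones_disjoint (O : Set (Term n)) (hO : IsOrderIdeal O)
    (lab : Term n → ℕ) (hinj : Set.InjOn lab (border O))
    (σ₁ σ₂ : Term n) (h₁ : σ₁ ∈ border O) (h₂ : σ₂ ∈ border O) (hne : σ₁ ≠ σ₂) :
    cone O lab σ₁ ∩ cone O lab σ₂ = ∅ := by
  ext τ
  simp only [Set.mem_inter_iff, Set.mem_empty_iff_false, iff_false]
  rintro ⟨⟨η₁, hη₁, rfl⟩, ⟨η₂, hη₂, heq⟩⟩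
  have hlab : lab σ₁ ≠ lab σ₂ := fun h => hne (hinj h₁ h₂ h)
  simp only at heq
  rcases lt_or_gt_of_ne hlab with h | h
  · exact hη₁ σ₂ h₂ h (heq ▸ (le_add_self : σ₂ ≤ η₂ + σ₂))
  · exact hη₂ σ₁ h₁ h (heq ▸ (le_add_self : σ₁ ≤ η₁ + σ₁))

end Border
end

section
/- Let 𝒪 be an order ideal in P = K[x_0,…,x_n] and fix a labeling of ∂𝒪 ordered increasingly by degree. Then for every σ ∈ ∂𝒪, every τ ∈ 𝒪 with deg(τ) = deg(σ), and every η in the multiplicative set 𝒯_σ, one has ind_𝒪(η·σ) > ind_𝒪(η·τ). -/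
open MvPolynomial

namespace Border

variable {n : ℕ}

variable {K : Type*} [Field K]

lemma tdeg_add' (a b : Term n) : tdeg (a + b) = tdeg a + tdeg b := by
  simp [tdeg, Finsupp.add_apply, Finset.sum_add_distrib]

lemma tdeg_single' (r : Fin (n + 1)) : tdeg (Finsupp.single r 1 : Term n) = 1 := by
  simp [tdeg, Finsupp.single_apply]

lemma tdeg_eq_zero' {a : Term n} (h : tdeg a = 0) : a = 0 := by
  ext i
  exact Finset.sum_eq_zero_iff.mp h i (Finset.mem_univ i)

lemma exists_split' {η : Term n} (h : η ≠ 0) :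
    ∃ (r : Fin (n + 1)) (η' : Term n),
      η = η' + Finsupp.single r 1 ∧ tdeg η' + 1 = tdeg η := by
  obtain ⟨r, hr⟩ : ∃ r, η r ≠ 0 := by
    by_contra hc
    push_neg at hc
    exact h (Finsupp.ext hc)
  refine ⟨r, η - Finsupp.single r 1, ?_, ?_⟩
  · ext i
    simp only [Finsupp.add_apply, Finsupp.tsub_apply, Finsupp.single_apply]
    by_cases hi : r = i
    · subst hi; rw [if_pos rfl]; omega
    · simp [hi]
  · have : η = (η - Finsupp.single r 1) + Finsupp.single r 1 := by
      ext i
      simp only [Finsupp.add_apply, Finsupp.tsub_apply, Finsupp.single_apply]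
      by_cases hi : r = i
      · subst hi; rw [if_pos rfl]; omega
      · simp [hi]
    conv_rhs => rw [this]
    rw [tdeg_add', tdeg_single']

lemma closure_mono' (O : Set (Term n)) : Monotone (borderClosure O) :=
  monotone_nat_of_le_succ fun _ => Set.subset_union_left

lemma O_subset_closure' (O : Set (Term n)) (k : ℕ) : O ⊆ borderClosure O k :=
  closure_mono' O (Nat.zero_le k)

lemma add_mem_closure' (O : Set (Term n)) {t : Term n} {j : ℕ}
    (ht : t ∈ borderClosure O j) :
    ∀ (d : ℕ) (η : Term n), tdeg η = d → η + t ∈ borderClosure O (j + d) := by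
  intro d
  induction d with
  | zero =>
    intro η hη
    have h0 : η = 0 := tdeg_eq_zero' hη
    simpa [h0] using ht
  | succ d ih =>
    intro η hη
    have hne : η ≠ 0 := by
      intro h0
      rw [h0] at hη
      simp [tdeg] at hη
    obtain ⟨r, η', hsplit, hd'⟩ := exists_split' hne
    have hη' : tdeg η' = d := by omega
    have hmem := ih η' hη'
    by_cases hc : η + t ∈ borderClosure O (j + d)
    · exact closure_mono' O (by omega) hc
    · have hbd : η + t ∈ border (borderClosure O (j + d)) := by
        refine ⟨hc, r, η' + t, hmem, ?_⟩
        rw [hsplit]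
        abel
      have : η + t ∈ borderClosure O (j + d + 1) := Or.inr hbd
      have hjd : j + (d + 1) = j + d + 1 := by omega
      rw [hjd]
      exact this

lemma closure_subset' (O : Set (Term n)) (k : ℕ) :
    borderClosure O k ⊆
      O ∪ {t | ∃ b ∈ border O, ∃ c : Term n, t = c + b ∧ tdeg c < k} := by
  induction k with
  | zero => exact Set.subset_union_left
  | succ k ih =>
    intro t ht
    rcases ht with ht | ht
    · rcases ih ht with h | ⟨b, hb, c, hceq, hc⟩
      · exact Or.inl h
      · exact Or.inr ⟨b, hb, c, hceq, by omega⟩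
    · obtain ⟨htn, r, s, hs, rfl⟩ := ht
      rcases ih hs with hsO | ⟨b, hb, c, hceq, hc⟩
      · refine Or.inr ⟨s + Finsupp.single r 1, ⟨?_, r, s, hsO, rfl⟩, 0, by rw [zero_add], by simp [tdeg]⟩
        intro hOmem
        exact htn (O_subset_closure' O k hOmem)
      · refine Or.inr ⟨b, hb, c + Finsupp.single r 1, ?_, ?_⟩
        · rw [hceq]; abel
        · rw [tdeg_add', tdeg_single']; omega

/-- **Index inequality.** For a degree-ordered labeling: if `σ ∈ ∂𝒪`, `τ ∈ 𝒪` with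
`deg τ = deg σ`, and `η ∈ 𝒯_σ`, then `ind(η·σ) > ind(η·τ)`. -/
theorem ind_mul_lt (O : Set (Term n)) (hO : IsOrderIdeal O)
    (lab : Term n → ℕ) (hlab : DegOrderedLabeling O lab)
    (σ : Term n) (hσ : σ ∈ border O) (τ : Term n) (hτ : τ ∈ O) (hdeg : tdeg τ = tdeg σ)
    (η : Term n) (hη : η ∈ mulSet O lab σ) :
    ind O (η + τ) < ind O (η + σ) := by
  by_contra hcon
  push_neg at hcon
  have hσO : σ ∉ O := hσ.1
  -- η + σ lies in some closure, hence in the closure at its index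
  have hσcl : σ ∈ borderClosure O 1 := Or.inr hσ
  have hησ : η + σ ∈ borderClosure O (1 + tdeg η) :=
    add_mem_closure' O hσcl (tdeg η) η rfl
  have hind : η + σ ∈ borderClosure O (ind O (η + σ)) := by
    have h : sInf {k | η + σ ∈ borderClosure O k} ∈ {k | η + σ ∈ borderClosure O k} :=
      Nat.sInf_mem ⟨1 + tdeg η, hησ⟩
    exact h
  have hmem : η + σ ∈ borderClosure O (ind O (η + τ)) :=
    closure_mono' O hcon hind
  rcases closure_subset' O _ hmem with hOmem | ⟨b, hb, c, heq, hc⟩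
  · exact hσO (hO.2 _ hOmem σ le_add_self)
  · have hble : b ≤ η + σ := by rw [heq]; exact le_add_self
    have hnlt : ¬ lab σ < lab b := fun hlt => hη b hb hlt hble
    have hdegb : tdeg b ≤ tdeg σ := by
      rcases lt_or_eq_of_le (not_lt.1 hnlt) with h | h
      · exact hlab.2 b hb σ hσ h
      · rw [hlab.1 hb hσ h]
    have h1 : tdeg η + tdeg σ = tdeg c + tdeg b := by
      have := congrArg tdeg heq
      rwa [tdeg_add', tdeg_add'] at this
    have h2 : ind O (η + τ) ≤ tdeg η := by
      have hτcl : τ ∈ borderClosure O 0 := hτ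
      have := add_mem_closure' O hτcl (tdeg η) η rfl
      rw [zero_add] at this
      exact Nat.sInf_le (show tdeg η ∈ {k | η + τ ∈ borderClosure O k} from this)
    omega

end Border
end
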